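/- Supermartingale property of polarized TV-informations for the BEC: define the random process T_0 = 1−p and T_{m+1} = T_m² with probability 1/2 (minus transform) or T_{m+1} = 2T_m − T_m² with probability 1/2 (plus transform), independently at each step. Then (T_m) is a bounded martingale in [0,1] and converges almost surely to a {0,1}-valued random variable with E[lim T_m] = 1 − p. -/

import Mathlib

open MeasureTheory ProbabilityTheory Filter

/-- The BEC TV-information process `T_0 = 1-p`, `T_{m+1} = T_m²` or `2T_m - T_m²`
with fair coin flips, is a `[0,1]`-bounded martingale (w.r.t. the natural filtration
of the coin flips) converging a.s. to a `{0,1}`-valued limit with mean `1-p`. -/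
theorem stmt_18 {Ω : Type*} [m0 : MeasurableSpace Ω] (μ : Measure Ω)
    [IsProbabilityMeasure μ]
    (B : ℕ → Ω → Bool) (hmeas : ∀ m, Measurable (B m))
    (hindep : iIndepFun B μ)
    (hber : ∀ m, μ {ω | B m ω = true} = 1/2)
    (p : ℝ) (hp : p ∈ Set.Icc (0:ℝ) 1)
    (T : ℕ → Ω → ℝ)
    (hT0 : ∀ ω, T 0 ω = 1 - p)
    (hTrec : ∀ m ω, T (m+1) ω =
      if B (m+1) ω then (T m ω)^2 else 2 * T m ω - (T m ω)^2) :
    (∀ m ω, T m ω ∈ Set.Icc (0:ℝ) 1) ∧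
    Martingale T
      (MeasureTheory.Filtration.natural (fun m => B m)
        (fun m => (hmeas m).stronglyMeasurable)) μ ∧
    ∃ Tlim : Ω → ℝ,
      (∀ᵐ ω ∂μ, Tendsto (fun m => T m ω) atTop (nhds (Tlim ω))) ∧
      (∀ᵐ ω ∂μ, Tlim ω = 0 ∨ Tlim ω = 1) ∧
      ∫ ω, Tlim ω ∂μ = 1 - p := by
  obtain ⟨hp0, hp1⟩ := hp
  set ℱ := MeasureTheory.Filtration.natural (fun m => B m)
      (fun m => (hmeas m).stronglyMeasurable) with hℱ
  -- boundedness
  have hbd : ∀ m ω, T m ω ∈ Set.Icc (0:ℝ) 1 := by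
    intro m
    induction m with
    | zero =>
      intro ω; rw [hT0, Set.mem_Icc]; constructor <;> linarith
    | succ n ih =>
      intro ω
      obtain ⟨h0, h1⟩ := ih ω
      rw [hTrec, Set.mem_Icc]
      by_cases hb : B (n+1) ω = true
      · rw [if_pos hb]; constructor <;> nlinarith
      · rw [if_neg hb]; constructor <;> nlinarith
  -- adaptedness
  have hadp : ∀ m, StronglyMeasurable[ℱ m] (T m) := by
    intro m
    induction m with
    | zero =>
      have : T 0 = fun _ => 1 - p := funext hT0
      rw [this]; exact stronglyMeasurable_const
    | succ n ih =>
      have hBn : Measurable[ℱ (n+1)] (B (n+1)) := by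
        refine Measurable.mono (comap_measurable (B (n+1))) ?_ le_rfl
        exact le_iSup₂ (f := fun j (_ : j ≤ n+1) => MeasurableSpace.comap (B j) ⊤)
          (n+1) le_rfl
      have hTn : Measurable[ℱ (n+1)] (T n) :=
        (ih.measurable).mono (ℱ.mono (Nat.le_succ n)) le_rfl
      have heq : T (n+1) = fun ω =>
          if B (n+1) ω then (T n ω)^2 else 2 * T n ω - (T n ω)^2 :=
        funext (hTrec n)
      rw [heq]
      refine Measurable.stronglyMeasurable ?_
      refine Measurable.ite ?_ (hTn.pow_const 2)
        ((measurable_const.mul hTn).sub (hTn.pow_const 2))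
      have hset : {a | B (n+1) a = true} = B (n+1) ⁻¹' {true} := by
        ext a; simp
      rw [hset]
      exact hBn trivial
  have hmeasT : ∀ m, Measurable (T m) := fun m => ((hadp m).measurable).mono (ℱ.le m) le_rfl
  -- integrability
  have hint : ∀ m, Integrable (T m) μ := by
    intro m
    refine ⟨(hmeasT m).aestronglyMeasurable, ?_⟩
    refine HasFiniteIntegral.of_bounded (C := 1) ?_
    filter_upwards with ω
    obtain ⟨h0, h1⟩ := hbd m ω
    rw [Real.norm_eq_abs, abs_le]; constructor <;> linarith
  -- the ±1 variable
  have hXm0 : ∀ m, Measurable (fun ω => if B (m+1) ω then (1:ℝ) else -1) := by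
    intro m
    exact (measurable_of_countable (fun b : Bool => if b then (1:ℝ) else -1)).comp
      (hmeas (m+1))
  have hXmeas : ∀ m, StronglyMeasurable[MeasurableSpace.comap (B (m+1)) ⊤]
      (fun ω => if B (m+1) ω then (1:ℝ) else -1) := by
    intro m
    have hg : Measurable (fun b : Bool => if b then (1:ℝ) else -1) :=
      measurable_of_countable _
    exact (hg.comp (comap_measurable (B (m+1)))).stronglyMeasurable
  have hXint : ∀ m, Integrable (fun ω => if B (m+1) ω then (1:ℝ) else -1) μ := by
    intro m
    refine ⟨(hXm0 m).aestronglyMeasurable, ?_⟩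
    refine HasFiniteIntegral.of_bounded (C := 1) ?_
    filter_upwards with ω
    by_cases hb : B (m+1) ω = true <;> simp [hb]
  have hXint0 : ∀ m, ∫ ω, (if B (m+1) ω then (1:ℝ) else -1) ∂μ = 0 := by
    intro m
    have hA : MeasurableSet {ω | B (m+1) ω = true} := by
      have hset : {a | B (m+1) a = true} = B (m+1) ⁻¹' {true} := by ext a; simp
      rw [hset]
      exact (hmeas (m+1)) trivial
    have heq : (fun ω => if B (m+1) ω then (1:ℝ) else -1)
        = fun ω => 2 * Set.indicator {ω | B (m+1) ω = true} (fun _ => (1:ℝ)) ω - 1 := by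
      funext ω; by_cases hb : B (m+1) ω = true <;>
        simp [hb, Set.indicator_apply] <;> norm_num
    have hind : Integrable (Set.indicator {ω | B (m+1) ω = true} (fun _ => (1:ℝ))) μ :=
      (integrable_const (1:ℝ)).indicator hA
    rw [heq, integral_sub (hind.const_mul 2) (integrable_const 1),
      integral_const_mul, integral_indicator_const _ hA, integral_const]
    rw [measureReal_def, hber (m+1)]
    simp [measure_univ]
    all_goals norm_num [ENNReal.toReal_div]
  -- conditional expectation of X
  have hXcond : ∀ m, μ[(fun ω => if B (m+1) ω then (1:ℝ) else -1) | ℱ m]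
      =ᵐ[μ] fun _ => 0 := by
    intro m
    have hindep' : Indep (MeasurableSpace.comap (B (m+1)) ⊤) (ℱ m) μ := by
      have := ProbabilityTheory.indep_iSup_of_disjoint
        (fun k => (hmeas k).comap_le) hindep
        (S := {m+1}) (T := {k | k ≤ m}) (by simp [Set.disjoint_left])
      rwa [iSup_singleton] at this
    have h := condExp_indep_eq (μ := μ) ((hmeas (m+1)).comap_le) (ℱ.le m)
      (hXmeas m) hindep'
    refine h.trans ?_
    rw [hXint0 m]
  -- martingale step
  have hkey : ∀ m, T m =ᵐ[μ] μ[T (m+1) | ℱ m] := by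
    intro m
    have hdec : T (m+1) = (fun ω => T m ω +
        (((T m ω)^2 - T m ω) * (if B (m+1) ω then (1:ℝ) else -1))) := by
      funext ω
      rw [hTrec]
      by_cases hb : B (m+1) ω = true
      · rw [if_pos hb, if_pos hb]; ring
      · rw [if_neg hb, if_neg hb]; ring
    have hgint : Integrable (fun ω =>
        ((T m ω)^2 - T m ω) * (if B (m+1) ω then (1:ℝ) else -1)) μ := by
      refine ⟨((((hmeasT m).pow_const 2).sub (hmeasT m)).mul (hXm0 m)).aestronglyMeasurable, ?_⟩
      refine HasFiniteIntegral.of_bounded (C := 1) ?_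
      filter_upwards with ω
      obtain ⟨h0, h1⟩ := hbd m ω
      rw [Real.norm_eq_abs, abs_mul]
      have ha : |(T m ω)^2 - T m ω| ≤ 1 := by rw [abs_le]; constructor <;> nlinarith
      have hb2 : |if B (m+1) ω then (1:ℝ) else -1| ≤ 1 := by
        by_cases hb : B (m+1) ω = true <;> simp [hb]
      exact (mul_le_mul ha hb2 (abs_nonneg _) zero_le_one).trans (by norm_num)
    rw [hdec]
    have h1 : μ[(fun ω => T m ω +
        (((T m ω)^2 - T m ω) * (if B (m+1) ω then (1:ℝ) else -1))) | ℱ m]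
        =ᵐ[μ] μ[T m | ℱ m] + μ[(fun ω =>
          ((T m ω)^2 - T m ω) * (if B (m+1) ω then (1:ℝ) else -1)) | ℱ m] :=
      condExp_add (hint m) hgint (ℱ m)
    have h2 : μ[T m | ℱ m] = T m :=
      condExp_of_stronglyMeasurable (ℱ.le m) (hadp m) (hint m)
    have h3 : μ[(fun ω => ((T m ω)^2 - T m ω) *
        (if B (m+1) ω then (1:ℝ) else -1)) | ℱ m]
        =ᵐ[μ] (fun ω => (T m ω)^2 - T m ω) *
          μ[(fun ω => (if B (m+1) ω then (1:ℝ) else -1)) | ℱ m] :=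
      condExp_mul_of_stronglyMeasurable_left
        ((((hadp m).measurable.pow_const 2).sub (hadp m).measurable).stronglyMeasurable)
        hgint (hXint m)
    refine EventuallyEq.symm (h1.trans ?_)
    have h4 : (fun ω => (T m ω)^2 - T m ω) *
        μ[(fun ω => (if B (m+1) ω then (1:ℝ) else -1)) | ℱ m] =ᵐ[μ] fun _ => 0 := by
      filter_upwards [hXcond m] with ω hω
      simp [hω]
    filter_upwards [h3.trans h4] with ω hω3
    simp only [Pi.add_apply, h2, hω3, add_zero]
  have hmart : Martingale T ℱ μ := martingale_nat hadp hint hkey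
  -- convergence
  have hbdd : ∀ n, eLpNorm (T n) 1 μ ≤ ((1 : NNReal) : ENNReal) := by
    intro n
    have := eLpNorm_le_of_ae_bound (f := T n) (p := 1) (μ := μ) (C := 1)
      (by filter_upwards with ω
          obtain ⟨h0, h1⟩ := hbd n ω
          rw [Real.norm_eq_abs, abs_le]; constructor <;> linarith)
    simpa [measure_univ] using this
  have htends := hmart.submartingale.ae_tendsto_limitProcess hbdd
  set Tlim := ℱ.limitProcess T μ with hTlim
  refine ⟨hbd, hmart, Tlim, htends, ?_, ?_⟩
  · -- {0,1}-valued limit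
    filter_upwards [htends] with ω hω
    have h1 : Tendsto (fun m => T (m+1) ω - T m ω) atTop (nhds 0) := by
      have := ((hω.comp (tendsto_add_atTop_nat 1)).sub hω)
      simpa using this
    have habs : ∀ m, |T (m+1) ω - T m ω| = T m ω - (T m ω)^2 := by
      intro m
      obtain ⟨h0, h1⟩ := hbd m ω
      rw [hTrec]
      by_cases hb : B (m+1) ω = true
      · rw [if_pos hb, abs_of_nonpos (by nlinarith)]; ring
      · rw [if_neg hb, abs_of_nonneg (by nlinarith)]; ring
    have h2 : Tendsto (fun m => T m ω - (T m ω)^2) atTop (nhds 0) := by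
      have := h1.abs
      simp only [abs_zero] at this
      exact this.congr (fun m => habs m)
    have h3 : Tendsto (fun m => T m ω - (T m ω)^2) atTop
        (nhds (Tlim ω - (Tlim ω)^2)) := hω.sub (hω.pow 2)
    have h4 : Tlim ω - (Tlim ω)^2 = 0 := tendsto_nhds_unique h3 h2
    have h5 : Tlim ω * (1 - Tlim ω) = 0 := by nlinarith
    rcases mul_eq_zero.1 h5 with h | h
    · exact Or.inl h
    · exact Or.inr (by linarith)
  · -- mean of the limit
    have hintm : ∀ m, ∫ ω, T m ω ∂μ = 1 - p := by
      intro m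
      have h0 : μ[T m | ℱ 0] =ᵐ[μ] T 0 := hmart.condExp_ae_eq (Nat.zero_le m)
      have h1 := integral_condExp (ℱ.le 0) (f := T m) (μ := μ)
      rw [← h1, integral_congr_ae h0]
      simp [hT0, measure_univ]
    have htendInt : Tendsto (fun m => ∫ ω, T m ω ∂μ) atTop (nhds (∫ ω, Tlim ω ∂μ)) := by
      refine tendsto_integral_of_dominated_convergence (fun _ => (1:ℝ))
        (fun m => (hmeasT m).aestronglyMeasurable) (integrable_const 1) ?_ htends
      intro m
      filter_upwards with ω
      obtain ⟨h0, h1⟩ := hbd m ω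
      rw [Real.norm_eq_abs, abs_le]; constructor <;> linarith
    have hconst : Tendsto (fun _ : ℕ => (1:ℝ) - p) atTop (nhds (1 - p)) := tendsto_const_nhds
    have := tendsto_nhds_unique (htendInt.congr (fun m => (hintm m))) hconst
    linarith
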